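/- arXiv:2304.09449 — 2 statements merged into one kernel-verified Lean document; each statement's English description precedes it below -/
import Mathlib

section
/- Let D ≥ 4 and k > D/2 be integers, x ≥ 0, and let g : [0,∞) × [0,∞) → ℝ be continuously differentiable in r with |∂g/∂r (u,s)| ≤ (8π x²/(D-2)²) · (1+u)^(-(2k-D)) · (1+s+u)^(-(D-1)) for all s > 0. Define ḡ(u,r) = (1/r) ∫₀^r g(u,s) ds. Then |g(u,r) - ḡ(u,r)| ≤ (8π x²/((D-3)(D-2)²)) · (1+u)^(-(2k-3)) · (1+r+u)^(-1) for all u ≥ 0 and r > 0, provided D > 3. -/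
open MeasureTheory Real

/-- FTC computation for the power integrand. -/
lemma ftc_rpow_aux (u q α β : ℝ) (hq : 0 < q) (hα : 0 ≤ α) (hu : 0 ≤ u) (hαβ : α ≤ β) :
    ∫ t in α..β, (1 + t + u) ^ (-(q + 1)) =
      ((1 + α + u) ^ (-q) - (1 + β + u) ^ (-q)) / q := by
  have hpos : ∀ t ∈ Set.uIcc α β, 0 < 1 + t + u := by
    intro t ht
    rw [Set.uIcc_of_le hαβ] at ht
    linarith [ht.1]
  have hF : ∀ t ∈ Set.uIcc α β,
      HasDerivAt (fun s => -((1 + s + u) ^ (-q) / q)) ((1 + t + u) ^ (-(q + 1))) t := by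
    intro t ht
    have h1 : HasDerivAt (fun s : ℝ => 1 + s + u) 1 t := by
      simpa using (((hasDerivAt_id t).const_add 1).add_const u)
    have h2 : HasDerivAt (fun y : ℝ => y ^ (-q)) (-q * (1 + t + u) ^ (-q - 1)) (1 + t + u) :=
      Real.hasDerivAt_rpow_const (Or.inl (hpos t ht).ne')
    have h4 := ((h2.comp t h1).div_const q).neg
    refine h4.congr_deriv ?_
    rw [show -(q + 1) = -q - 1 by ring]
    field_simp
  have hint : IntervalIntegrable (fun t => (1 + t + u) ^ (-(q + 1))) volume α β := by
    apply ContinuousOn.intervalIntegrable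
    apply ContinuousOn.rpow_const
    · exact ((continuous_const.add continuous_id).add continuous_const).continuousOn
    · exact fun t ht => Or.inl (hpos t ht).ne'
  rw [intervalIntegral.integral_eq_sub_of_hasDerivAt hF hint]
  ring

set_option maxHeartbeats 1000000 in
/-- Estimate for the difference between g and its radial mean ḡ. -/
theorem stmt_2 (D k : ℕ) (hD : 4 ≤ D) (hD3 : 3 < D) (hk : (D : ℝ) / 2 < k)
    (x : ℝ) (hx : 0 ≤ x) (g g' : ℝ → ℝ → ℝ)
    (hderiv : ∀ u s : ℝ, 0 < s → HasDerivAt (fun t => g u t) (g' u s) s)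
    (hbound : ∀ u s : ℝ, 0 ≤ u → 0 < s →
      |g' u s| ≤ (8 * π * x ^ 2 / ((D : ℝ) - 2) ^ 2) * (1 + u) ^ (-(2 * (k : ℝ) - D)) *
        (1 + s + u) ^ (-((D : ℝ) - 1)))
    (u r : ℝ) (hu : 0 ≤ u) (hr : 0 < r) :
    |g u r - (1 / r) * ∫ s in (0 : ℝ)..r, g u s| ≤
      (8 * π * x ^ 2 / (((D : ℝ) - 3) * ((D : ℝ) - 2) ^ 2)) *
        (1 + u) ^ (-(2 * (k : ℝ) - 3)) * (1 + r + u) ^ (-(1 : ℝ)) := by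
  have hD4 : (4 : ℝ) ≤ (D : ℝ) := by exact_mod_cast hD
  have hD2 : (0 : ℝ) < (D : ℝ) - 2 := by linarith
  have hm : (1 : ℝ) ≤ (D : ℝ) - 3 := by linarith
  have hm0 : (0 : ℝ) < (D : ℝ) - 3 := by linarith
  set C : ℝ := (8 * π * x ^ 2 / ((D : ℝ) - 2) ^ 2) * (1 + u) ^ (-(2 * (k : ℝ) - D)) with hCdef
  clear_value C
  have hapos : (0 : ℝ) < 1 + u := by linarith
  have hbpos : (0 : ℝ) < 1 + r + u := by linarith
  have hbound' : ∀ t : ℝ, 0 < t → |g' u t| ≤ C * (1 + t + u) ^ (-((D : ℝ) - 1)) := by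
    intro t ht
    rw [hCdef]
    exact hbound u t hu ht
  have hC : 0 ≤ C := by
    rw [hCdef]
    exact mul_nonneg (by positivity) (Real.rpow_nonneg hapos.le _)
  -- key pointwise bound
  have keybound : ∀ s : ℝ, 0 < s → s ≤ r →
      |g u r - g u s| ≤ C / ((D : ℝ) - 2) * (1 + s + u) ^ (-((D : ℝ) - 2)) := by
    intro s hs hsr
    have hgs : ∀ t ∈ Set.uIcc s r, HasDerivAt (g u) (g' u t) t := by
      intro t ht
      rw [Set.uIcc_of_le hsr] at ht
      exact hderiv u t (lt_of_lt_of_le hs ht.1)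
    have hint : IntervalIntegrable (g' u) volume s r := by
      rw [intervalIntegrable_iff, Set.uIoc_of_le hsr]
      refine ⟨?_, HasFiniteIntegral.restrict_of_bounded (C := C) measure_Ioc_lt_top ?_⟩
      · apply ((measurable_deriv (g u)).aestronglyMeasurable.restrict).congr
        filter_upwards [ae_restrict_mem measurableSet_Ioc] with t ht
        exact (hderiv u t (hs.trans ht.1)).deriv
      · filter_upwards [ae_restrict_mem measurableSet_Ioc] with t ht
        have h1 := hbound' t (hs.trans ht.1)
        have h2 : (1 + t + u) ^ (-((D : ℝ) - 1)) ≤ 1 :=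
          Real.rpow_le_one_of_one_le_of_nonpos (by linarith [(hs.trans ht.1).le]) (by linarith)
        rw [Real.norm_eq_abs]
        calc |g' u t| ≤ C * (1 + t + u) ^ (-((D : ℝ) - 1)) := h1
          _ ≤ C := mul_le_of_le_one_right hC h2
    have hcont : IntervalIntegrable (fun t => C * (1 + t + u) ^ (-((D : ℝ) - 1))) volume s r := by
      apply ContinuousOn.intervalIntegrable
      apply ContinuousOn.mul continuousOn_const
      apply ContinuousOn.rpow_const
      · exact ((continuous_const.add continuous_id).add continuous_const).continuousOn
      · intro t ht
        rw [Set.uIcc_of_le hsr] at ht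
        exact Or.inl (by linarith [ht.1] : (0:ℝ) < 1 + t + u).ne'
    have heq : g u r - g u s = ∫ t in s..r, g' u t :=
      (intervalIntegral.integral_eq_sub_of_hasDerivAt hgs hint).symm
    have hftc : ∫ t in s..r, (1 + t + u) ^ (-(((D : ℝ) - 2) + 1)) =
        ((1 + s + u) ^ (-((D : ℝ) - 2)) - (1 + r + u) ^ (-((D : ℝ) - 2))) / ((D : ℝ) - 2) :=
      ftc_rpow_aux u ((D : ℝ) - 2) s r hD2 hs.le hu hsr
    have hexp : -(((D : ℝ) - 2) + 1) = -((D : ℝ) - 1) := by ring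
    rw [hexp] at hftc
    calc |g u r - g u s| = |∫ t in s..r, g' u t| := by rw [heq]
      _ ≤ ∫ t in s..r, |g' u t| := intervalIntegral.abs_integral_le_integral_abs hsr
      _ ≤ ∫ t in s..r, C * (1 + t + u) ^ (-((D : ℝ) - 1)) := by
          apply intervalIntegral.integral_mono_on hsr hint.abs hcont
          intro t ht
          exact hbound' t (lt_of_lt_of_le hs ht.1)
      _ = C * ∫ t in s..r, (1 + t + u) ^ (-((D : ℝ) - 1)) :=
          intervalIntegral.integral_const_mul _ _
      _ = C * (((1 + s + u) ^ (-((D : ℝ) - 2)) - (1 + r + u) ^ (-((D : ℝ) - 2))) / ((D : ℝ) - 2)) := by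
          rw [hftc]
      _ ≤ C / ((D : ℝ) - 2) * (1 + s + u) ^ (-((D : ℝ) - 2)) := by
          have hB : 0 ≤ (1 + r + u) ^ (-((D : ℝ) - 2)) := Real.rpow_nonneg hbpos.le _
          have hCq : 0 ≤ C / ((D : ℝ) - 2) := div_nonneg hC hD2.le
          have : C * (((1 + s + u) ^ (-((D : ℝ) - 2)) - (1 + r + u) ^ (-((D : ℝ) - 2))) / ((D : ℝ) - 2))
              = C / ((D : ℝ) - 2) * (1 + s + u) ^ (-((D : ℝ) - 2))
                - C / ((D : ℝ) - 2) * (1 + r + u) ^ (-((D : ℝ) - 2)) := by ring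
          rw [this]
          nlinarith [mul_nonneg hCq hB]
  -- integrability of g u on (0, r]
  have hgint : IntervalIntegrable (g u) volume 0 r := by
    rw [intervalIntegrable_iff, Set.uIoc_of_le hr.le]
    refine ⟨?_, HasFiniteIntegral.restrict_of_bounded (C := |g u r| + C / ((D : ℝ) - 2))
      measure_Ioc_lt_top ?_⟩
    · refine ContinuousOn.aestronglyMeasurable ?_ measurableSet_Ioc
      intro s hs
      exact ((hderiv u s hs.1).continuousAt).continuousWithinAt
    · filter_upwards [ae_restrict_mem measurableSet_Ioc] with s hs
      have h1 := keybound s hs.1 hs.2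
      have h2 : (1 + s + u) ^ (-((D : ℝ) - 2)) ≤ 1 :=
        Real.rpow_le_one_of_one_le_of_nonpos (by linarith [hs.1.le]) (by linarith)
      have h3 : C / ((D : ℝ) - 2) * (1 + s + u) ^ (-((D : ℝ) - 2)) ≤ C / ((D : ℝ) - 2) :=
        mul_le_of_le_one_right (div_nonneg hC hD2.le) h2
      have h4 : |g u s| - |g u r| ≤ |g u s - g u r| := abs_sub_abs_le_abs_sub _ _
      rw [abs_sub_comm] at h4
      rw [Real.norm_eq_abs]
      linarith
  -- rewrite the difference as an average
  have hsub : ∫ s in (0:ℝ)..r, (g u r - g u s) = r * g u r - ∫ s in (0:ℝ)..r, g u s := by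
    rw [intervalIntegral.integral_sub intervalIntegrable_const hgint,
      intervalIntegral.integral_const]
    simp [smul_eq_mul, mul_comm]
  have key2 : g u r - (1 / r) * ∫ s in (0:ℝ)..r, g u s
      = (1 / r) * ∫ s in (0:ℝ)..r, (g u r - g u s) := by
    rw [hsub]
    field_simp
  -- bound on the averaged integrand
  have hΦint : IntervalIntegrable
      (fun s => C / ((D : ℝ) - 2) * (1 + s + u) ^ (-((D : ℝ) - 2))) volume 0 r := by
    apply ContinuousOn.intervalIntegrable
    apply ContinuousOn.mul continuousOn_const
    apply ContinuousOn.rpow_const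
    · exact ((continuous_const.add continuous_id).add continuous_const).continuousOn
    · intro t ht
      rw [Set.uIcc_of_le hr.le] at ht
      exact Or.inl (by linarith [ht.1] : (0:ℝ) < 1 + t + u).ne'
  have h3 : |∫ s in (0:ℝ)..r, (g u r - g u s)|
      ≤ ∫ s in (0:ℝ)..r, C / ((D : ℝ) - 2) * (1 + s + u) ^ (-((D : ℝ) - 2)) := by
    refine (intervalIntegral.abs_integral_le_integral_abs hr.le).trans ?_
    apply intervalIntegral.integral_mono_ae_restrict hr.le
      (intervalIntegrable_const.sub hgint).abs hΦint
    have hne : ∀ᵐ s : ℝ ∂(volume.restrict (Set.Icc 0 r)), s ≠ 0 := by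
      refine ae_restrict_of_ae ?_
      have : volume ({(0:ℝ)} : Set ℝ) = 0 := volume_singleton
      exact (MeasureTheory.ae_iff.mpr (by simpa using this))
    filter_upwards [hne, ae_restrict_mem measurableSet_Icc] with s hs0 hs
    exact keybound s (lt_of_le_of_ne hs.1 (Ne.symm hs0)) hs.2
  -- compute the integral of the majorant
  have hftc2 : ∫ s in (0:ℝ)..r, (1 + s + u) ^ (-(((D : ℝ) - 3) + 1)) =
      ((1 + 0 + u) ^ (-((D : ℝ) - 3)) - (1 + r + u) ^ (-((D : ℝ) - 3))) / ((D : ℝ) - 3) :=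
    ftc_rpow_aux u ((D : ℝ) - 3) 0 r hm0 le_rfl hu hr.le
  have hexp2 : -(((D : ℝ) - 3) + 1) = -((D : ℝ) - 2) := by ring
  rw [hexp2] at hftc2
  have h4 : ∫ s in (0:ℝ)..r, C / ((D : ℝ) - 2) * (1 + s + u) ^ (-((D : ℝ) - 2))
      = C / ((D : ℝ) - 2) *
        (((1 + u) ^ (-((D : ℝ) - 3)) - (1 + r + u) ^ (-((D : ℝ) - 3))) / ((D : ℝ) - 3)) := by
    rw [intervalIntegral.integral_const_mul, hftc2]
    norm_num
  -- Bernoulli-type estimate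
  set m : ℝ := (D : ℝ) - 3 with hmdef
  set A : ℝ := (1 + u) ^ (-m) with hA
  set B : ℝ := (1 + r + u) ^ (-m) with hB
  clear_value A B
  have hApos : 0 < A := by rw [hA]; exact Real.rpow_pos_of_pos hapos _
  have hBpos : 0 < B := by rw [hB]; exact Real.rpow_pos_of_pos hbpos _
  have hber : A - B ≤ ((D : ℝ) - 2) * r * A / (1 + r + u) := by
    have hq : (0:ℝ) < (1 + u) / (1 + r + u) := div_pos hapos hbpos
    have hber0 : 1 + m * ((1 + u) / (1 + r + u) - 1) ≤ ((1 + u) / (1 + r + u)) ^ m := by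
      have := one_add_mul_self_le_rpow_one_add
        (s := (1 + u) / (1 + r + u) - 1) (by linarith) hm
      rwa [show 1 + ((1 + u) / (1 + r + u) - 1) = (1 + u) / (1 + r + u) by ring] at this
    have hdiv : ((1 + u) / (1 + r + u)) ^ m = (1 + u) ^ m / (1 + r + u) ^ m :=
      Real.div_rpow hapos.le hbpos.le m
    have hAB : A * ((1 + u) / (1 + r + u)) ^ m = B := by
      rw [hdiv, hA, hB, Real.rpow_neg hapos.le, Real.rpow_neg hbpos.le]
      field_simp
    have h5 : A - B ≤ A * (m * (1 - (1 + u) / (1 + r + u))) := by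
      have := mul_le_mul_of_nonneg_left hber0 hApos.le
      rw [hAB] at this
      nlinarith
    have h6 : 1 - (1 + u) / (1 + r + u) = r / (1 + r + u) := by
      field_simp
      ring
    rw [h6] at h5
    calc A - B ≤ A * (m * (r / (1 + r + u))) := h5
      _ = m * r * A / (1 + r + u) := by ring
      _ ≤ ((D : ℝ) - 2) * r * A / (1 + r + u) := by
          gcongr
          linarith
  -- final assembly
  have hexp3 : (1 + u) ^ (-(2 * (k : ℝ) - 3)) = (1 + u) ^ (-(2 * (k : ℝ) - (D : ℝ))) * A := by
    rw [hA, ← Real.rpow_add hapos]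
    congr 1
    rw [hmdef]
    ring
  have hr' : r ≠ 0 := hr.ne'
  have hb' : (1 + r + u) ≠ 0 := hbpos.ne'
  have hm' : m ≠ 0 := hm0.ne'
  have hd2' : ((D : ℝ) - 2) ≠ 0 := hD2.ne'
  have h7 : |∫ s in (0:ℝ)..r, (g u r - g u s)| ≤ C / ((D : ℝ) - 2) * ((A - B) / m) :=
    h3.trans (le_of_eq h4)
  rw [key2, abs_mul, abs_of_pos (one_div_pos.mpr hr)]
  calc (1 / r) * |∫ s in (0:ℝ)..r, (g u r - g u s)|
      ≤ (1 / r) * (C / ((D : ℝ) - 2) * ((A - B) / m)) :=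
        mul_le_mul_of_nonneg_left h7 (by positivity)
    _ ≤ (1 / r) * (C / ((D : ℝ) - 2) * ((((D : ℝ) - 2) * r * A / (1 + r + u)) / m)) := by
        gcongr
    _ = (8 * π * x ^ 2 / (m * ((D : ℝ) - 2) ^ 2)) *
          ((1 + u) ^ (-(2 * (k : ℝ) - (D : ℝ))) * A) * (1 + r + u)⁻¹ := by
        rw [hCdef]
        field_simp
    _ = (8 * π * x ^ 2 / (m * ((D : ℝ) - 2) ^ 2)) *
          (1 + u) ^ (-(2 * (k : ℝ) - 3)) * (1 + r + u) ^ (-(1 : ℝ)) := by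
        rw [Real.rpow_neg_one, hexp3]
end

section
/- Let D ≥ 4, let R̂ > 0 be constant, and let g, g̃, V, w be as follows: g, g̃ > 0 with g̃ ≤ g, ∂g/∂r = (8π g/((D-2) r)) w², ∂g̃/∂r = [R̂/((D-2) r) + ((D-5)/r)(g̃/g) + (16π r/(D-2)) V] g, where V ≤ 0. Define M = (r^(D-3)/2)(R̂/(D-2) + (D-5) g̃/g). Then ∂M/∂r = (D-4) r^(D-4) R̂/(D-2) + (D-5) r^(D-4) (g̃/g) [ (D-4) - (4π/(D-2)) w² + (8π r² V/(D-2))(g/g̃) ]. In particular, for D = 5, ∂M/∂r = (R̂/3) r ≥ 0; and for D = 4, ∂M/∂r = 2π (g̃/g) w² - 4π r² V ≥ 0. -/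
open Real

/-- Differentiation identity for the mass-like function M, and the cases D = 4, 5. -/
theorem stmt_12 (D : ℕ) (hD : 4 ≤ D) (R : ℝ) (hR : 0 < R)
    (g gt w V : ℝ → ℝ)
    (hg : ∀ r > (0 : ℝ), 0 < g r) (hgt : ∀ r > (0 : ℝ), 0 < gt r)
    (hle : ∀ r > (0 : ℝ), gt r ≤ g r) (hV : ∀ r > (0 : ℝ), V r ≤ 0)
    (hgd : ∀ r > (0 : ℝ), HasDerivAt g ((8 * π * g r / (((D : ℝ) - 2) * r)) * w r ^ 2) r)
    (hgtd : ∀ r > (0 : ℝ), HasDerivAt gt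
      ((R / (((D : ℝ) - 2) * r) + (((D : ℝ) - 5) / r) * (gt r / g r) +
        (16 * π * r / ((D : ℝ) - 2)) * V r) * g r) r)
    (M : ℝ → ℝ)
    (hM : ∀ r : ℝ, M r = (r ^ ((D : ℝ) - 3) / 2) * (R / ((D : ℝ) - 2) + ((D : ℝ) - 5) * gt r / g r)) :
    ∀ r > (0 : ℝ),
      HasDerivAt M
        (((D : ℝ) - 4) * r ^ ((D : ℝ) - 4) * R / ((D : ℝ) - 2) +
          ((D : ℝ) - 5) * r ^ ((D : ℝ) - 4) * (gt r / g r) *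
            (((D : ℝ) - 4) - (4 * π / ((D : ℝ) - 2)) * w r ^ 2 +
              (8 * π * r ^ 2 * V r / ((D : ℝ) - 2)) * (g r / gt r))) r ∧
      (D = 5 →
        ((D : ℝ) - 4) * r ^ ((D : ℝ) - 4) * R / ((D : ℝ) - 2) +
          ((D : ℝ) - 5) * r ^ ((D : ℝ) - 4) * (gt r / g r) *
            (((D : ℝ) - 4) - (4 * π / ((D : ℝ) - 2)) * w r ^ 2 +
              (8 * π * r ^ 2 * V r / ((D : ℝ) - 2)) * (g r / gt r)) = (R / 3) * r ∧
        0 ≤ (R / 3) * r) ∧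
      (D = 4 →
        ((D : ℝ) - 4) * r ^ ((D : ℝ) - 4) * R / ((D : ℝ) - 2) +
          ((D : ℝ) - 5) * r ^ ((D : ℝ) - 4) * (gt r / g r) *
            (((D : ℝ) - 4) - (4 * π / ((D : ℝ) - 2)) * w r ^ 2 +
              (8 * π * r ^ 2 * V r / ((D : ℝ) - 2)) * (g r / gt r)) =
          2 * π * (gt r / g r) * w r ^ 2 - 4 * π * r ^ 2 * V r ∧
        0 ≤ 2 * π * (gt r / g r) * w r ^ 2 - 4 * π * r ^ 2 * V r) := by

  intro r hr
  have hD4 : (4:ℝ) ≤ (D:ℝ) := by exact_mod_cast hD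
  have hD2 : ((D : ℝ) - 2) ≠ 0 := by linarith
  have hr0 : r ≠ 0 := ne_of_gt hr
  have hgr := hg r hr
  have hgtr := hgt r hr
  have hgr' : g r ≠ 0 := ne_of_gt hgr
  have hgtr' : gt r ≠ 0 := ne_of_gt hgtr
  have hpow : HasDerivAt (fun x : ℝ => x ^ ((D:ℝ) - 3)) (((D:ℝ)-3) * r ^ ((D:ℝ)-4)) r := by
    have h := Real.hasDerivAt_rpow_const (x := r) (p := (D:ℝ)-3) (Or.inl hr0)
    have he : (D:ℝ) - 3 - 1 = (D:ℝ) - 4 := by ring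
    rwa [he] at h
  have hsplit : r ^ ((D:ℝ)-3) = r ^ ((D:ℝ)-4) * r := by
    rw [show ((D:ℝ)-3) = ((D:ℝ)-4)+1 by ring, Real.rpow_add hr, Real.rpow_one]
  have hMfun : M = fun x => (x ^ ((D : ℝ) - 3) / 2) *
      (R / ((D : ℝ) - 2) + ((D : ℝ) - 5) * gt x / g x) := funext hM
  set g' := (8 * π * g r / (((D : ℝ) - 2) * r)) * w r ^ 2 with hg'def
  set gt' := (R / (((D : ℝ) - 2) * r) + (((D : ℝ) - 5) / r) * (gt r / g r) +
        (16 * π * r / ((D : ℝ) - 2)) * V r) * g r with hgt'def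
  have hq : HasDerivAt (fun x => R / ((D : ℝ) - 2) + ((D : ℝ) - 5) * gt x / g x)
      (((((D:ℝ)-5) * gt') * g r - (((D:ℝ)-5) * gt r) * g') / (g r) ^ 2) r := by
    exact (((hgtd r hr).const_mul ((D:ℝ)-5)).div (hgd r hr) hgr').const_add _
  have h1 := (hpow.div_const 2).mul hq
  have hval : ((D:ℝ)-3) * r ^ ((D:ℝ)-4) / 2 * (R / ((D : ℝ) - 2) + ((D : ℝ) - 5) * gt r / g r)
      + r ^ ((D:ℝ)-3) / 2 * ((((D:ℝ)-5) * gt' * g r - ((D:ℝ)-5) * gt r * g') / (g r) ^ 2)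
      = ((D : ℝ) - 4) * r ^ ((D : ℝ) - 4) * R / ((D : ℝ) - 2) +
          ((D : ℝ) - 5) * r ^ ((D : ℝ) - 4) * (gt r / g r) *
            (((D : ℝ) - 4) - (4 * π / ((D : ℝ) - 2)) * w r ^ 2 +
              (8 * π * r ^ 2 * V r / ((D : ℝ) - 2)) * (g r / gt r)) := by
    rw [hg'def, hgt'def, hsplit]
    field_simp
    ring
  refine ⟨by rw [hMfun]; exact hval ▸ h1, ?_, ?_⟩
  · intro h5
    subst h5
    have : ((5:ℕ):ℝ) = 5 := by norm_num
    rw [this]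
    norm_num
    constructor
    · ring
    · positivity
  · intro h4
    subst h4
    have : ((4:ℕ):ℝ) = 4 := by norm_num
    rw [this]
    norm_num [Real.rpow_zero]
    constructor
    · field_simp
      ring
    · have h1 : 0 ≤ 2 * π * (gt r / g r) * w r ^ 2 := by positivity
      have h2 : 4 * π * r ^ 2 * V r ≤ 0 :=
        mul_nonpos_of_nonneg_of_nonpos (by positivity) (hV r hr)
      linarith
end
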